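/- Let l ∈ FP(G) be a loop based at the vertex v (s(l) = r(l) = v). Then for every k ≥ 0, ⟨(L_l + L_l*)^{2k} ξ_v, ξ_v⟩ equals the k-th Catalan number C_k = (2k)!/(k!(k+1)!); for every odd n, ⟨(L_l + L_l*)^n ξ_u, ξ_u⟩ = 0 for every vertex u; and for every n ≥ 1 and every vertex u ≠ v, ⟨(L_l + L_l*)^n ξ_u, ξ_u⟩ = 0. (This is the concrete content of the statement that L_l + L_l* is a D_G-semicircular element for a loop l.) -/

import Mathlib

open ContinuousLinearMap
open scoped InnerProductSpace Classical

/-- An abstract model of the free semigroupoid `𝔽⁺(G)` of a countable directed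
graph `G` (in the sense of Kribs--Power): the elements are the vertices of `G`
(acting as units) together with the admissible finite paths; every element `w`
has a source vertex `s(w)` and a range vertex `r(w)` (with `s(v) = r(v) = v`
for vertices), and the concatenation `wh` is defined exactly when
`s(h) = r(w)`.  The `length` is the number of edges of a path (`0` exactly for
vertices) and is additive under concatenation. -/
structure FreeSemigroupoid where
  /-- the underlying set `𝔽⁺(G)` -/
  W : Type
  countable : Countable W
  /-- `isVertex w` means `w ∈ V(G)`; `¬ isVertex w` means `w ∈ FP(G)` -/
  isVertex : W → Prop
  /-- the source vertex `s(w)` -/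
  src : W → W
  /-- the range vertex `r(w)` -/
  rng : W → W
  isVertex_src : ∀ w, isVertex (src w)
  isVertex_rng : ∀ w, isVertex (rng w)
  src_of_vertex : ∀ v, isVertex v → src v = v
  rng_of_vertex : ∀ v, isVertex v → rng v = v
  /-- the concatenation `wh`, defined exactly when `s(h) = r(w)` -/
  mul : (w h : W) → src h = rng w → W
  src_mul : ∀ w h hc, src (mul w h hc) = src w
  rng_mul : ∀ w h hc, rng (mul w h hc) = rng h
  mul_vertex_left : ∀ v w hc, isVertex v → mul v w hc = w
  mul_vertex_right : ∀ w v hc, isVertex v → mul w v hc = w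
  mul_left_cancel : ∀ w h h' hc hc', mul w h hc = mul w h' hc' → h = h'
  mul_assoc : ∀ w₁ w₂ w₃ (h12 : src w₂ = rng w₁) (h23 : src w₃ = rng w₂)
      (h12_3 : src w₃ = rng (mul w₁ w₂ h12)) (h1_23 : src (mul w₂ w₃ h23) = rng w₁),
      mul (mul w₁ w₂ h12) w₃ h12_3 = mul w₁ (mul w₂ w₃ h23) h1_23
  /-- the number of edges of `w` (`0` exactly for vertices) -/
  length : W → ℕ
  length_eq_zero_iff : ∀ w, length w = 0 ↔ isVertex w
  length_mul : ∀ w h hc, length (mul w h hc) = length w + length h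


/-- number of nonnegative ±1 paths of length `n` from height `m` to height `0`. -/
def cpath : ℕ → ℕ → ℕ
  | 0, 0 => 1
  | 0, _+1 => 0
  | n+1, 0 => cpath n 1
  | n+1, m+1 => cpath n (m+2) + cpath n m

theorem cpath_odd : ∀ n m, (n + m) % 2 = 1 → cpath n m = 0 := by
  intro n
  induction n with
  | zero =>
    intro m hm
    match m, hm with
    | m+1, _ => rfl
  | succ n ih =>
    intro m hm
    match m with
    | 0 => rw [show cpath (n+1) 0 = cpath n 1 from rfl, ih 1 (by omega)]
    | m+1 =>
      rw [show cpath (n+1) (m+1) = cpath n (m+2) + cpath n m from rfl,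
        ih (m+2) (by omega), ih m (by omega)]

theorem cpath_even : ∀ n m j, n + m = 2 * j →
    cpath n m + Nat.choose n (j + 1) = Nat.choose n j := by
  intro n
  induction n with
  | zero =>
    intro m j hj
    match m, j, hj with
    | 0, 0, _ => rfl
    | m+1, j, hj =>
      obtain ⟨jj, rfl⟩ : ∃ jj, j = jj + 1 := ⟨j - 1, by omega⟩
      simp [cpath]
  | succ n ih =>
    intro m j hj
    obtain ⟨jj, rfl⟩ : ∃ jj, j = jj + 1 := ⟨j - 1, by omega⟩
    match m with
    | 0 =>
      have h1 : cpath n 1 + Nat.choose n (jj + 2) = Nat.choose n (jj + 1) :=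
        ih 1 (jj + 1) (by omega)
      have hsym : Nat.choose n jj = Nat.choose n (jj + 1) := by
        have h := Nat.choose_symm (n := n) (k := jj + 1) (by omega)
        rwa [show n - (jj + 1) = jj from by omega] at h
      have hp1 : Nat.choose (n+1) (jj+2) = Nat.choose n (jj+1) + Nat.choose n (jj+2) :=
        Nat.choose_succ_succ n (jj+1)
      have hp2 : Nat.choose (n+1) (jj+1) = Nat.choose n jj + Nat.choose n (jj+1) :=
        Nat.choose_succ_succ n jj
      have hn : Nat.choose (n+1) (jj+1+1) = Nat.choose (n+1) (jj+2) := rfl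
      show cpath n 1 + _ = _
      omega
    | m+1 =>
      have h1 : cpath n (m+2) + Nat.choose n (jj + 2) = Nat.choose n (jj + 1) :=
        ih (m+2) (jj+1) (by omega)
      have h2 : cpath n m + Nat.choose n (jj + 1) = Nat.choose n jj :=
        ih m jj (by omega)
      have hp1 : Nat.choose (n+1) (jj+2) = Nat.choose n (jj+1) + Nat.choose n (jj+2) :=
        Nat.choose_succ_succ n (jj+1)
      have hp2 : Nat.choose (n+1) (jj+1) = Nat.choose n jj + Nat.choose n (jj+1) :=
        Nat.choose_succ_succ n jj
      have hn : Nat.choose (n+1) (jj+1+1) = Nat.choose (n+1) (jj+2) := rfl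
      show cpath n (m+2) + cpath n m + _ = _
      omega

theorem cpath_catalan (k : ℕ) : cpath (2 * k) 0 = catalan k := by
  have h1 : cpath (2*k) 0 + Nat.choose (2*k) (k+1) = Nat.choose (2*k) k :=
    cpath_even (2*k) 0 k (by omega)
  have h2 : Nat.choose (2*k) (k+1) * (k+1) = Nat.choose (2*k) k * k := by
    have := Nat.choose_succ_right_eq (2*k) k
    rwa [show 2*k - k = k from by omega] at this
  have h4 : (k+1) * catalan k = Nat.choose (2*k) k :=
    by rw [succ_mul_catalan_eq_centralBinom k, Nat.centralBinom]
  have e1 : (cpath (2*k) 0) * (k+1) + Nat.choose (2*k) (k+1) * (k+1)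
      = Nat.choose (2*k) k * (k+1) := by rw [← Nat.add_mul, h1]
  rw [h2] at e1
  have e2 : (cpath (2*k) 0) * (k+1) = Nat.choose (2*k) k := by
    have : Nat.choose (2*k) k * (k+1) = Nat.choose (2*k) k * k + Nat.choose (2*k) k := by
      ring
    omega
  have e3 : (cpath (2*k) 0) * (k+1) = catalan k * (k+1) := by
    rw [e2, ← h4]; ring
  exact Nat.eq_of_mul_eq_mul_right (by omega) e3

/-- iterated powers of the loop `l` based at `v` -/
noncomputable def ppath (F : FreeSemigroupoid) (l v : F.W) : ℕ → F.W :=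
  fun m => Nat.rec v
    (fun _ w => if hc : F.src w = F.rng l then F.mul l w hc else v) m

theorem ppath_succ (F : FreeSemigroupoid) (l v : F.W) (m : ℕ) :
    ppath F l v (m + 1) =
      if hc : F.src (ppath F l v m) = F.rng l
      then F.mul l (ppath F l v m) hc else v := rfl

/-- Let `l ∈ FP(G)` be a loop based at the vertex `v`
(`s(l) = r(l) = v`).  Then for every `k ≥ 0`,
`⟨(L_l + L_l⋆)^{2k} ξ_v, ξ_v⟩` equals the `k`-th Catalan number
`C_k = (2k)!/(k!(k+1)!)`; for every odd `n`,
`⟨(L_l + L_l⋆)^n ξ_u, ξ_u⟩ = 0` for every vertex `u`; and for every `n ≥ 1`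
and every vertex `u ≠ v`, `⟨(L_l + L_l⋆)^n ξ_u, ξ_u⟩ = 0`.  (This is the
concrete content of the `D_G`-semicircularity of `L_l + L_l⋆`.) -/
theorem statement18 (F : FreeSemigroupoid) {H : Type} [NormedAddCommGroup H]
    [InnerProductSpace ℂ H] [CompleteSpace H] (ξ : HilbertBasis F.W ℂ H)
    (L : F.W → H →L[ℂ] H)
    (hL : ∀ w h : F.W,
      L w (ξ h) = if hc : F.src h = F.rng w then ξ (F.mul w h hc) else 0)
    (l v : F.W) (hv : F.isVertex v) (hl : ¬ F.isVertex l)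
    (hs : F.src l = v) (hr : F.rng l = v) :
    (∀ k : ℕ,
      ⟪((L l + adjoint (L l)) ^ (2 * k)) (ξ v), ξ v⟫_ℂ = (catalan k : ℂ)) ∧
    (∀ n : ℕ, Odd n → ∀ u : F.W, F.isVertex u →
      ⟪((L l + adjoint (L l)) ^ n) (ξ u), ξ u⟫_ℂ = 0) ∧
    (∀ n : ℕ, 1 ≤ n → ∀ u : F.W, F.isVertex u → u ≠ v →
      ⟪((L l + adjoint (L l)) ^ n) (ξ u), ξ u⟫_ℂ = 0) := by
  classical
  set T := L l + adjoint (L l) with hTdef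
  have hlen_l : F.length l ≠ 0 := fun h => hl ((F.length_eq_zero_iff l).1 h)
  have horth : ∀ i j : F.W, ⟪ξ i, ξ j⟫_ℂ = if i = j then 1 else 0 :=
    orthonormal_iff_ite.mp ξ.orthonormal
  have hext : ∀ x y : H, (∀ g : F.W, ⟪x, ξ g⟫_ℂ = ⟪y, ξ g⟫_ℂ) → x = y := by
    intro x y h
    apply ξ.repr.injective
    ext g
    rw [ξ.repr_apply_apply, ξ.repr_apply_apply, ← inner_conj_symm (ξ g) x,
      ← inner_conj_symm (ξ g) y, h g]
  have hver_ne : ∀ (u : F.W), F.isVertex u → ∀ g (hc : F.src g = F.rng l),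
      u ≠ F.mul l g hc := by
    intro u hu g hc h
    have h1 := F.length_mul l g hc
    rw [← h] at h1
    have h2 : F.length u = 0 := (F.length_eq_zero_iff u).2 hu
    omega
  have hadj0 : ∀ u, F.isVertex u → adjoint (L l) (ξ u) = 0 := by
    intro u hu
    apply hext
    intro g
    rw [adjoint_inner_left, hL l g, inner_zero_left]
    split_ifs with hc
    · rw [horth, if_neg (hver_ne u hu g hc)]
    · exact inner_zero_right _
  set p : ℕ → F.W := ppath F l v with hpdef
  have hp0 : p 0 = v := rfl
  have hsrc : ∀ m, F.src (p m) = F.rng l := by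
    intro m
    induction m with
    | zero => show F.src v = F.rng l; rw [F.src_of_vertex v hv, hr]
    | succ m ih =>
      rw [hpdef, ppath_succ, dif_pos ih, F.src_mul, hs, hr]
  have hpsucc : ∀ m, p (m+1) = F.mul l (p m) (hsrc m) := by
    intro m
    have h := ppath_succ F l v m
    rw [dif_pos (hsrc m)] at h
    exact h
  have hpv : ∀ m, p m = v ↔ m = 0 := by
    intro m
    cases m with
    | zero => simp [hp0]
    | succ m =>
      simp only [Nat.succ_ne_zero, iff_false]
      intro h
      have h1 : F.length (p (m+1)) = F.length l + F.length (p m) := by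
        rw [hpsucc m]; exact F.length_mul l (p m) (hsrc m)
      rw [h] at h1
      have h2 : F.length v = 0 := (F.length_eq_zero_iff v).2 hv
      omega
  have hLp : ∀ m, L l (ξ (p m)) = ξ (p (m+1)) := by
    intro m
    rw [hL l (p m), dif_pos (hsrc m), ← hpsucc m]
  have hAp : ∀ m, adjoint (L l) (ξ (p (m+1))) = ξ (p m) := by
    intro m
    apply hext
    intro g
    rw [adjoint_inner_left, hL l g]
    split_ifs with hc
    · rw [horth, horth]
      by_cases hg : p m = g
      · subst hg
        rw [if_pos (hpsucc m), if_pos rfl]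
      · rw [if_neg, if_neg hg]
        intro h
        exact hg (F.mul_left_cancel l (p m) g (hsrc m) hc ((hpsucc m).symm.trans h))
    · rw [inner_zero_right, horth, if_neg]
      intro h
      exact hc (h ▸ hsrc m)
  have hT0 : T (ξ (p 0)) = ξ (p 1) := by
    rw [hTdef, add_apply, hp0, hadj0 v hv, add_zero, ← hp0, hLp 0]
  have hTsucc : ∀ m, T (ξ (p (m+1))) = ξ (p (m+2)) + ξ (p m) := by
    intro m
    rw [hTdef, add_apply, hLp (m+1), hAp m]
  have hS : ∀ n m, ⟪(T ^ n) (ξ (p m)), ξ v⟫_ℂ = (cpath n m : ℂ) := by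
    intro n
    induction n with
    | zero =>
      intro m
      rw [pow_zero, ContinuousLinearMap.one_apply, horth]
      cases m with
      | zero => rw [if_pos hp0, show cpath 0 0 = 1 from rfl]; norm_num
      | succ m =>
        rw [if_neg (fun h => by simpa using (hpv (m+1)).mp h),
          show cpath 0 (m+1) = 0 from rfl]
        norm_num
    | succ n ih =>
      intro m
      rw [pow_succ, ContinuousLinearMap.mul_apply]
      cases m with
      | zero =>
        rw [hT0, ih 1, show cpath (n+1) 0 = cpath n 1 from rfl]
      | succ m =>
        rw [hTsucc m, map_add, inner_add_left, ih (m+2), ih m,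
          show cpath (n+1) (m+1) = cpath n (m+2) + cpath n m from rfl]
        push_cast
        ring
  have hTu : ∀ u, F.isVertex u → u ≠ v → T (ξ u) = 0 := by
    intro u hu huv
    rw [hTdef, add_apply, hadj0 u hu, add_zero, hL l u, dif_neg]
    rw [F.src_of_vertex u hu, hr]
    exact huv
  refine ⟨?_, ?_, ?_⟩
  · intro k
    have h := hS (2 * k) 0
    rw [hp0] at h
    rw [h, cpath_catalan]
  · intro n hn u hu
    by_cases huv : u = v
    · subst huv
      have h := hS n 0
      rw [hp0, cpath_odd n 0 (by have := Nat.odd_iff.mp hn; omega)] at h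
      simpa using h
    · obtain ⟨j, rfl⟩ : ∃ j, n = j + 1 := ⟨n - 1, by have := hn.pos; omega⟩
      rw [pow_succ, ContinuousLinearMap.mul_apply, hTu u hu huv, map_zero, inner_zero_left]
  · intro n hn u hu huv
    obtain ⟨j, rfl⟩ : ∃ j, n = j + 1 := ⟨n - 1, by omega⟩
    rw [pow_succ, ContinuousLinearMap.mul_apply, hTu u hu huv, map_zero, inner_zero_left]
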